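/- Let B be a supersoluble brace. Then the derived ideal ∂(B) satisfies ∂(B) = Soc_n(∂(B)) for some n ∈ ℕ, i.e. ∂(B) has finite multipermutational level. -/

import Mathlib

/-- A (skew left) brace: a set with an additive group structure (not necessarily abelian)
and a multiplicative group structure sharing the same identity, satisfying the skew
distributive law `a * (b + c) = a * b + -a + a * c`. -/
class SkewBrace (B : Type*) extends AddGroup B, Group B where
  one_eq_zero : (1 : B) = (0 : B)
  skew_distrib : ∀ a b c : B, a * (b + c) = a * b + -a + a * c

/-- A group is supersoluble if it has a finite chain of normal subgroups with all
factors cyclic. -/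
def Group.IsSupersoluble (G : Type*) [Group G] : Prop :=
  ∃ (n : ℕ) (H : ℕ → Subgroup G),
    H 0 = ⊥ ∧ H n = ⊤ ∧ (∀ i, (H i).Normal) ∧ (∀ i, i < n → H i ≤ H (i + 1)) ∧
    ∀ i, i < n → ∃ x ∈ H (i + 1), ∀ y ∈ H (i + 1), ∃ k : ℤ, (x ^ k)⁻¹ * y ∈ H i

namespace SkewBrace

variable {B : Type*} [SkewBrace B]

/-- `lam a b = -a + a * b`, i.e. `λ_a(b)`. -/
def lam (a b : B) : B := -a + a * b

/-- the star operation `a ∗ b = λ_a(b) - b`. -/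
def starOp (a b : B) : B := lam a b + -b

/-- the additive commutator `[a,b]_+`. -/
def addCommutator (a b : B) : B := -a + -b + a + b

/-- A subbrace of `B`: a subset that is a subgroup of both `(B,+)` and `(B,·)`. -/
structure Subbrace (B : Type*) [SkewBrace B] where
  carrier : Set B
  zero_mem : (0 : B) ∈ carrier
  add_mem : ∀ {a b : B}, a ∈ carrier → b ∈ carrier → a + b ∈ carrier
  neg_mem : ∀ {a : B}, a ∈ carrier → -a ∈ carrier
  mul_mem : ∀ {a b : B}, a ∈ carrier → b ∈ carrier → a * b ∈ carrier
  inv_mem : ∀ {a : B}, a ∈ carrier → a⁻¹ ∈ carrier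

/-- An ideal of `B`: a subbrace that is normal in `(B,+)` and in `(B,·)` and is
invariant under all the maps `λ_b`. -/
structure BraceIdeal (B : Type*) [SkewBrace B] extends Subbrace B where
  addConj_mem : ∀ (b : B) {a : B}, a ∈ carrier → b + a + -b ∈ carrier
  mulConj_mem : ∀ (b : B) {a : B}, a ∈ carrier → b * a * b⁻¹ ∈ carrier
  lam_mem : ∀ (b : B) {a : B}, a ∈ carrier → lam b a ∈ carrier

/-- The additive subgroup underlying a subbrace. -/
def Subbrace.addSubgroup (S : Subbrace B) : AddSubgroup B where
  carrier := S.carrier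
  zero_mem' := S.zero_mem
  add_mem' := S.add_mem
  neg_mem' := S.neg_mem

/-- The multiplicative subgroup underlying a subbrace. -/
def Subbrace.subgroup (S : Subbrace B) : Subgroup B where
  carrier := S.carrier
  one_mem' := by rw [one_eq_zero]; exact S.zero_mem
  mul_mem' := S.mul_mem
  inv_mem' := S.inv_mem

/-- Given ideals `J ≤ I` of `B`, `MemSocQuotRel I J x` says that the coset of `x`
lies in `Soc(I/J) = Ker(λ) ∩ Z(I/J, +)` (for `I = B` take `I = Set.univ`). -/
def MemSocQuotRel (I J : Set B) (x : B) : Prop :=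
  x ∈ I ∧ (∀ y ∈ I, -y + lam x y ∈ J) ∧ ∀ y ∈ I, -(y + x) + (x + y) ∈ J

/-- Given ideals `J ≤ I` of `B`, `MemZetaQuotRel I J x` says that the coset of `x`
lies in `ζ(I/J) = Soc(I/J) ∩ Z(I/J, ·)`. -/
def MemZetaQuotRel (I J : Set B) (x : B) : Prop :=
  MemSocQuotRel I J x ∧ ∀ y ∈ I, (y * x)⁻¹ * (x * y) ∈ J

/-- The coset of `x` lies in `Soc(B/J)`. -/
def MemSocQuot (J : Set B) (x : B) : Prop := MemSocQuotRel Set.univ J x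

/-- The coset of `x` lies in `ζ(B/J)`. -/
def MemZetaQuot (J : Set B) (x : B) : Prop := MemZetaQuotRel Set.univ J x

/-- For ideals `I ≤ J`, the additive group of the quotient `J/I` is infinite cyclic. -/
def QuotAddInfCyclic (I J : Set B) : Prop :=
  ∃ x ∈ J, (∀ y ∈ J, ∃ n : ℤ, -(n • x) + y ∈ I) ∧ ∀ n : ℤ, n • x ∈ I → n = 0

/-- For ideals `I ≤ J`, the quotient `J/I` has prime order `p`. -/
def QuotPrimeOrder (I J : Set B) (p : ℕ) : Prop :=
  p.Prime ∧ ∃ x ∈ J, x ∉ I ∧ p • x ∈ I ∧ ∀ y ∈ J, ∃ n : ℤ, -(n • x) + y ∈ I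

/-- A brace is supersoluble if it has a finite chain of ideals each factor of which
either is additively infinite cyclic and contained in the socle of the corresponding
quotient, or has prime order. -/
def IsSupersoluble (B : Type*) [SkewBrace B] : Prop :=
  ∃ (n : ℕ) (I : ℕ → BraceIdeal B),
    (I 0).carrier = {0} ∧ (I n).carrier = Set.univ ∧
    (∀ i, i < n → (I i).carrier ⊆ (I (i + 1)).carrier) ∧
    ∀ i, i < n →
      (QuotAddInfCyclic (I i).carrier (I (i + 1)).carrier ∧
        ∀ x ∈ (I (i + 1)).carrier, MemSocQuot (I i).carrier x) ∨
      ∃ p : ℕ, QuotPrimeOrder (I i).carrier (I (i + 1)).carrier p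

/-- The upper socle series of the brace (carrier of the ideal) `I`. -/
def socChainRel (I : Set B) : ℕ → Set B
  | 0 => {0}
  | n + 1 => {x | MemSocQuotRel I (socChainRel I n) x}

/-- The upper central series of the brace (carrier of the ideal) `I`. -/
def zetaChainRel (I : Set B) : ℕ → Set B
  | 0 => {0}
  | n + 1 => {x | MemZetaQuotRel I (zetaChainRel I n) x}

/-- The upper socle series `Soc_n(B)` of `B`. -/
def socChain (B : Type*) [SkewBrace B] : ℕ → Set B := socChainRel Set.univ

/-- The upper central series `ζ_n(B)` of `B`. -/
def zetaChain (B : Type*) [SkewBrace B] : ℕ → Set B := zetaChainRel Set.univ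

/-- A brace is centrally nilpotent if its upper central series reaches `B`. -/
def IsCentrallyNilpotent (B : Type*) [SkewBrace B] : Prop :=
  ∃ m : ℕ, zetaChain B m = Set.univ

end SkewBrace

namespace SkewBrace

/-- The derived ideal `∂(B)`: the additive subgroup of `B` generated by all the
elements `a ∗ b` and all the additive commutators `[a,b]_+`. -/
def derivedIdeal (B : Type*) [SkewBrace B] : Set B :=
  ↑(AddSubgroup.closure
      {z : B | (∃ a b : B, z = starOp a b) ∨ ∃ a b : B, z = addCommutator a b})


/-! ### Basic lemmas about skew braces -/

section Basics

variable {C : Type*} [SkewBrace C]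

theorem lam_add (a b c : C) : lam a (b + c) = lam a b + lam a c := by
  unfold lam
  rw [skew_distrib]
  simp [add_assoc]

/-- `lam a` as an additive homomorphism. -/
def lamHom (a : C) : C →+ C := AddMonoidHom.mk' (lam a) (lam_add a)

@[simp] theorem lam_zero_right (a : C) : lam a 0 = 0 := (lamHom a).map_zero

theorem lam_neg (a b : C) : lam a (-b) = -lam a b := (lamHom a).map_neg b

theorem mul_zero_right (a : C) : a * (0 : C) = a := by
  have h := skew_distrib a 0 0
  rw [add_zero, add_assoc] at h
  have h3 : a * 0 + 0 = a * 0 + (-a + a * 0) := by rw [add_zero]; exact h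
  have h4 := add_left_cancel h3
  rw [eq_comm, neg_add_eq_zero] at h4
  exact h4.symm

theorem mul_neg_right (a b : C) : a * (-b) = a + -(a * b) + a := by
  have h := skew_distrib a (-b) b
  rw [neg_add_cancel, mul_zero_right] at h
  have key : a * -b + -a + a * b = a := h.symm
  calc a * -b = a * -b + -a + a * b + -(a * b) + a := by simp [add_assoc]
    _ = a + -(a*b) + a := by rw [key]

theorem lam_mul (a b c : C) : lam (a * b) c = lam a (lam b c) := by
  unfold lam
  rw [skew_distrib, mul_neg_right, mul_assoc]
  simp [add_assoc]

theorem lam_one_left (c : C) : lam (1 : C) c = c := by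
  unfold lam
  rw [one_mul, one_eq_zero, neg_zero, zero_add]

theorem mul_eq_add_lam (a b : C) : a * b = a + lam a b := by
  unfold lam; rw [add_neg_cancel_left]

theorem lam_lam_inv (a b : C) : lam a⁻¹ (lam a b) = b := by
  rw [← lam_mul, inv_mul_cancel, lam_one_left]

theorem starOp_add_cancel (a b : C) : starOp a b + b = lam a b := by
  unfold starOp; rw [add_assoc, neg_add_cancel, add_zero]

theorem lam_eq_star_add (a b : C) : lam a b = starOp a b + b :=
  (starOp_add_cancel a b).symm

end Basics

/-! ### Utilities for ideals and the derived ideal -/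

section IdealUtils

variable {C : Type*} [SkewBrace C]

theorem BraceIdeal.coset_equiv (I : BraceIdeal C) {a b : C} :
    -a + b ∈ I.carrier ↔ a⁻¹ * b ∈ I.carrier := by
  constructor
  · intro h
    have hb : b = a * (lam a⁻¹ (-a + b)) := by
      rw [mul_eq_add_lam, ← lam_mul, mul_inv_cancel, lam_one_left, add_neg_cancel_left]
    rw [hb, ← mul_assoc, inv_mul_cancel, one_mul]
    exact I.lam_mem a⁻¹ h
  · intro h
    have hb : b = a + lam a (a⁻¹ * b) := by
      rw [← mul_eq_add_lam, ← mul_assoc, mul_inv_cancel, one_mul]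
    rw [hb, neg_add_cancel_left]
    exact I.lam_mem a h

theorem BraceIdeal.one_mem (I : BraceIdeal C) : (1 : C) ∈ I.carrier := by
  rw [one_eq_zero]; exact I.zero_mem

/-- The generating set of the derived ideal. -/
theorem starOp_mem_derived (a b : C) : starOp a b ∈ derivedIdeal C :=
  AddSubgroup.subset_closure (Or.inl ⟨a, b, rfl⟩)

theorem addCommutator_mem_derived (a b : C) : addCommutator a b ∈ derivedIdeal C :=
  AddSubgroup.subset_closure (Or.inr ⟨a, b, rfl⟩)

theorem zero_mem_derived : (0 : C) ∈ derivedIdeal C :=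
  (AddSubgroup.closure _).zero_mem

theorem add_mem_derived {a b : C} (ha : a ∈ derivedIdeal C) (hb : b ∈ derivedIdeal C) :
    a + b ∈ derivedIdeal C := (AddSubgroup.closure _).add_mem ha hb

theorem neg_mem_derived {a : C} (ha : a ∈ derivedIdeal C) : -a ∈ derivedIdeal C :=
  (AddSubgroup.closure _).neg_mem ha

theorem conj_mem_derived (y : C) {d : C} (hd : d ∈ derivedIdeal C) :
    y + d + -y ∈ derivedIdeal C := by
  induction hd using AddSubgroup.closure_induction with
  | mem s hs =>
      have hsD : s ∈ derivedIdeal C := AddSubgroup.subset_closure hs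
      have hc : addCommutator s (-y) ∈ derivedIdeal C := addCommutator_mem_derived s (-y)
      have : y + s + -y = s + addCommutator s (-y) := by
        unfold addCommutator; simp [add_assoc]
      rw [this]; exact add_mem_derived hsD hc
  | zero => simpa using zero_mem_derived
  | add x z hx hz hx' hz' =>
      have : y + (x + z) + -y = (y + x + -y) + (y + z + -y) := by simp [add_assoc]
      rw [this]; exact add_mem_derived hx' hz'
  | neg x hx hx' =>
      have : y + -x + -y = -(y + x + -y) := by simp [add_assoc]
      rw [this]; exact neg_mem_derived hx'

end IdealUtils

/-! ### Quotient of a skew brace by an ideal -/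

section QuotientBrace

variable {C : Type*} [SkewBrace C]

def idealSetoid (I : BraceIdeal C) : Setoid C where
  r x y := -x + y ∈ I.carrier
  iseqv := by
    constructor
    · intro x; rw [neg_add_cancel]; exact I.zero_mem
    · intro x y h
      have : -y + x = -(-x + y) := by simp [add_assoc]
      rw [this]; exact I.neg_mem h
    · intro x y z h1 h2
      have : -x + z = (-x + y) + (-y + z) := by simp [add_assoc]
      rw [this]; exact I.add_mem h1 h2

def BraceQuot (I : BraceIdeal C) : Type _ := Quotient (idealSetoid I)

variable {I : BraceIdeal C}

def bq (I : BraceIdeal C) (x : C) : BraceQuot I := Quotient.mk (idealSetoid I) x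

theorem bq_eq_iff {x y : C} : bq I x = bq I y ↔ -x + y ∈ I.carrier := by
  constructor
  · intro h; exact Quotient.exact h
  · intro h; exact Quotient.sound h

theorem bq_surj (z : BraceQuot I) : ∃ x, bq I x = z := by
  induction z using Quotient.ind with
  | _ x => exact ⟨x, rfl⟩

private theorem add_congr {x x' y y' : C} (hx : -x + x' ∈ I.carrier)
    (hy : -y + y' ∈ I.carrier) : -(x + y) + (x' + y') ∈ I.carrier := by
  have : -(x + y) + (x' + y') = (-y + (-x + x') + y) + (-y + y') := by simp [add_assoc]
  rw [this]
  have h2 := I.addConj_mem (-y) hx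
  rw [neg_neg] at h2
  exact I.add_mem h2 hy

private theorem mul_congr {x x' y y' : C} (hx : -x + x' ∈ I.carrier)
    (hy : -y + y' ∈ I.carrier) : -(x * y) + (x' * y') ∈ I.carrier := by
  rw [I.coset_equiv] at hx hy ⊢
  have : (x * y)⁻¹ * (x' * y') = (y⁻¹ * (x⁻¹ * x') * y) * (y⁻¹ * y') := by
    group
  rw [this]
  refine I.mul_mem ?_ hy
  have := I.mulConj_mem y⁻¹ hx
  simpa using this

instance : Add (BraceQuot I) :=
  ⟨Quotient.map₂ (· + ·) (fun _ _ h1 _ _ h2 => add_congr h1 h2)⟩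

instance : Neg (BraceQuot I) :=
  ⟨Quotient.map Neg.neg (by
    intro x y h
    show -(-x) + -y ∈ I.carrier
    have : -(-x) + -y = x + -(-x + y) + -x := by simp [add_assoc]
    rw [this]; exact I.addConj_mem x (I.neg_mem h))⟩

instance : Zero (BraceQuot I) := ⟨bq I 0⟩

instance : Mul (BraceQuot I) :=
  ⟨Quotient.map₂ (· * ·) (fun _ _ h1 _ _ h2 => mul_congr h1 h2)⟩

instance : Inv (BraceQuot I) :=
  ⟨Quotient.map Inv.inv (by
    intro x y h
    have h' : -x + y ∈ I.carrier := h
    show -x⁻¹ + y⁻¹ ∈ I.carrier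
    rw [I.coset_equiv] at h' ⊢
    rename' h' => h
    have : (x⁻¹)⁻¹ * y⁻¹ = x * (x⁻¹ * y)⁻¹ * x⁻¹ := by group
    rw [this]
    exact I.mulConj_mem x (I.inv_mem h))⟩

instance : One (BraceQuot I) := ⟨bq I 1⟩

theorem bq_add (x y : C) : bq I x + bq I y = bq I (x + y) := rfl
theorem bq_neg (x : C) : -(bq I x) = bq I (-x) := rfl
theorem bq_mul (x y : C) : bq I x * bq I y = bq I (x * y) := rfl
theorem bq_inv (x : C) : (bq I x)⁻¹ = bq I (x⁻¹) := rfl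
theorem bq_zero : (0 : BraceQuot I) = bq I 0 := rfl
theorem bq_one : (1 : BraceQuot I) = bq I 1 := rfl

instance : AddGroup (BraceQuot I) :=
  AddGroup.ofLeftAxioms
    (by
      intro a b c
      obtain ⟨x, rfl⟩ := bq_surj a; obtain ⟨y, rfl⟩ := bq_surj b; obtain ⟨z, rfl⟩ := bq_surj c
      rw [bq_add, bq_add, bq_add, bq_add, add_assoc])
    (by
      intro a
      obtain ⟨x, rfl⟩ := bq_surj a
      rw [bq_zero, bq_add, zero_add])
    (by
      intro a
      obtain ⟨x, rfl⟩ := bq_surj a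
      rw [bq_neg, bq_add, neg_add_cancel, bq_zero])

instance : Group (BraceQuot I) :=
  Group.ofLeftAxioms
    (by
      intro a b c
      obtain ⟨x, rfl⟩ := bq_surj a; obtain ⟨y, rfl⟩ := bq_surj b; obtain ⟨z, rfl⟩ := bq_surj c
      rw [bq_mul, bq_mul, bq_mul, bq_mul, mul_assoc])
    (by
      intro a
      obtain ⟨x, rfl⟩ := bq_surj a
      rw [bq_one, bq_mul, one_mul])
    (by
      intro a
      obtain ⟨x, rfl⟩ := bq_surj a
      rw [bq_inv, bq_mul, inv_mul_cancel, bq_one])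

instance : SkewBrace (BraceQuot I) where
  one_eq_zero := by rw [bq_one, bq_zero, one_eq_zero]
  skew_distrib := by
    intro a b c
    obtain ⟨x, rfl⟩ := bq_surj a; obtain ⟨y, rfl⟩ := bq_surj b; obtain ⟨z, rfl⟩ := bq_surj c
    rw [bq_add, bq_mul, bq_mul, bq_mul, bq_neg, bq_add, bq_add, skew_distrib]

theorem bq_lam (x y : C) : lam (bq I x) (bq I y) = bq I (lam x y) := rfl
theorem bq_star (x y : C) : starOp (bq I x) (bq I y) = bq I (starOp x y) := rfl
theorem bq_addCommutator (x y : C) :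
    addCommutator (bq I x) (bq I y) = bq I (addCommutator x y) := rfl

theorem bq_eq_zero_iff {x : C} : bq I x = 0 ↔ x ∈ I.carrier := by
  rw [bq_zero, bq_eq_iff]
  constructor
  · intro h; have := I.neg_mem h; simpa using this
  · intro h; simpa using I.neg_mem h

/-- The projection as an additive monoid homomorphism. -/
def bqAddHom (I : BraceIdeal C) : C →+ BraceQuot I := AddMonoidHom.mk' (bq I) (fun _ _ => rfl)

theorem bq_nsmul (n : ℕ) (x : C) : bq I (n • x) = n • bq I x := (bqAddHom I).map_nsmul n x

theorem bq_zsmul (n : ℤ) (x : C) : bq I (n • x) = n • bq I x := (bqAddHom I).map_zsmul n x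

theorem bq_derived {y : C} (hy : y ∈ derivedIdeal C) : bq I y ∈ derivedIdeal (BraceQuot I) := by
  induction hy using AddSubgroup.closure_induction with
  | mem s hs =>
      rcases hs with ⟨a, b, rfl⟩ | ⟨a, b, rfl⟩
      · rw [← bq_star]; exact starOp_mem_derived _ _
      · rw [← bq_addCommutator]; exact addCommutator_mem_derived _ _
  | zero => rw [← bq_zero]; exact zero_mem_derived
  | add x z _ _ hx' hz' => rw [← bq_add]; exact add_mem_derived hx' hz'
  | neg x _ hx' => rw [← bq_neg]; exact neg_mem_derived hx'

end QuotientBrace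

/-! ### The key lemma: a prime-order ideal acts trivially on the derived ideal -/

theorem prime_ideal_socle {C : Type*} [SkewBrace C] (p : ℕ) (hp : p.Prime) (x₀ : C)
    (hx0 : x₀ ≠ 0) (hxp : p • x₀ = 0)
    (hlam0 : ∀ b : C, ∃ n : ℤ, lam b x₀ = n • x₀)
    (hcj0 : ∀ b : C, ∃ n : ℤ, b + x₀ + -b = n • x₀)
    (hmc0 : ∀ b : C, ∃ n : ℤ, b * x₀ * b⁻¹ = n • x₀) :
    ∀ w ∈ derivedIdeal C, ∀ n : ℤ, lam (n • x₀) w = w ∧ n • x₀ + w = w + n • x₀ := by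
  haveI hfp : Fact p.Prime := ⟨hp⟩
  haveI : NeZero p := ⟨hp.ne_zero⟩
  -- additive order of x₀ is p
  have hord : addOrderOf x₀ = p := by
    have h1 : addOrderOf x₀ ∣ p := addOrderOf_dvd_of_nsmul_eq_zero hxp
    rcases (hp.eq_one_or_self_of_dvd _ h1) with h | h
    · exact absurd (AddMonoid.addOrderOf_eq_one_iff.mp h) hx0
    · exact h
  -- ℤ-scalar criterion
  have hzero_iff : ∀ m : ℤ, m • x₀ = 0 ↔ ((m : ZMod p) = 0) := by
    intro m
    rw [← addOrderOf_dvd_iff_zsmul_eq_zero, hord, ZMod.intCast_zmod_eq_zero_iff_dvd]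
  have heq_iff : ∀ m k : ℤ, m • x₀ = k • x₀ ↔ ((m : ZMod p) = (k : ZMod p)) := by
    intro m k
    constructor
    · intro h
      have : (m - k) • x₀ = 0 := by rw [sub_zsmul, h, add_neg_cancel]
      have h2 := (hzero_iff _).mp this
      push_cast at h2
      linear_combination h2
    · intro h
      have h2 : ((m - k : ℤ) : ZMod p) = 0 := by push_cast; linear_combination h
      have := (hzero_iff _).mpr h2
      rw [sub_zsmul] at this
      calc m • x₀ = (m • x₀ + -(k • x₀)) + k • x₀ := by simp [add_assoc]
        _ = 0 + k • x₀ := by rw [this]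
        _ = k • x₀ := zero_add _
  -- the parametrization of P by ZMod p
  obtain ⟨sm, hcast, hinj, hadd⟩ :
      ∃ sm : ZMod p → C, (∀ m : ℤ, m • x₀ = sm (m : ZMod p)) ∧
        (∀ k l, sm k = sm l → k = l) ∧ (∀ k l, sm (k + l) = sm k + sm l) := by
    refine ⟨fun k => (k.val : ℤ) • x₀, fun m => ?_, fun k l h => ?_, fun k l => ?_⟩
    · rw [heq_iff]
      simp [ZMod.natCast_val, ZMod.cast_id]
    · have := (heq_iff _ _).mp h
      simpa [ZMod.natCast_val, ZMod.cast_id] using this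
    · rw [← add_zsmul, heq_iff]
      simp [ZMod.natCast_val, ZMod.cast_id]
  have hsm_zero : sm 0 = 0 := by
    have := hcast 0; simpa using this.symm
  have hsm_neg : ∀ k, sm (-k) = -(sm k) := by
    intro k
    have h1 : sm k + sm (-k) = 0 := by rw [← hadd]; simp [hsm_zero]
    exact (neg_eq_of_add_eq_zero_right h1).symm
  have hsm_comm : ∀ k l, sm k + sm l = sm l + sm k := by
    intro k l; rw [← hadd, ← hadd, add_comm]
  have hzsm : ∀ (m : ℤ) (k : ZMod p), m • sm k = sm (m * k) := by
    intro m k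
    have h1 : sm k = ((k.val : ℤ)) • x₀ := by
      rw [hcast]
      congr 1
      simp [ZMod.natCast_val, ZMod.cast_id]
    rw [h1, ← mul_zsmul, hcast]
    congr 1
    push_cast [ZMod.natCast_val, ZMod.cast_id]
    ring
  have hx1 : x₀ = sm 1 := by
    have := hcast 1; simpa using this
  -- scalar functions
  obtain ⟨al, hal⟩ : ∃ al : C → ZMod p, ∀ b, lam b x₀ = sm (al b) := by
    choose nf hnf using hlam0
    exact ⟨fun b => ((nf b : ℤ) : ZMod p), fun b => (hnf b).trans (hcast _)⟩
  obtain ⟨eps, heps⟩ : ∃ eps : C → ZMod p, ∀ b, b + x₀ + -b = sm (eps b) := by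
    choose nf hnf using hcj0
    exact ⟨fun b => ((nf b : ℤ) : ZMod p), fun b => (hnf b).trans (hcast _)⟩
  obtain ⟨ka, hka⟩ : ∃ ka : C → ZMod p, ∀ b, b * x₀ * b⁻¹ = sm (ka b) := by
    choose nf hnf using hmc0
    exact ⟨fun b => ((nf b : ℤ) : ZMod p), fun b => (hnf b).trans (hcast _)⟩
  -- transport along `lam b` and conjugation
  have hlam_sm : ∀ (b : C) (k : ZMod p), lam b (sm k) = sm (al b * k) := by
    intro b k
    have h1 : sm k = ((k.val : ℤ)) • x₀ := by
      rw [hcast]; congr 1; simp [ZMod.natCast_val, ZMod.cast_id]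
    rw [h1, show lam b ((k.val:ℤ) • x₀) = (k.val:ℤ) • lam b x₀ from
        (lamHom b).map_zsmul _ x₀, hal, hzsm]
    congr 1
    rw [mul_comm]
    congr 1
    simp [ZMod.natCast_val, ZMod.cast_id]
  have hcj_sm : ∀ (b : C) (k : ZMod p), b + sm k + -b = sm (eps b * k) := by
    intro b k
    have hhom : ∀ z w : C, (b + (z + w) + -b) = (b + z + -b) + (b + w + -b) := by
      intro z w; simp [add_assoc]
    have h1 : sm k = ((k.val : ℤ)) • x₀ := by
      rw [hcast]; congr 1; simp [ZMod.natCast_val, ZMod.cast_id]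
    have h2 : b + ((k.val:ℤ) • x₀) + -b = (k.val:ℤ) • (b + x₀ + -b) :=
      (AddMonoidHom.mk' (fun z => b + z + -b) hhom).map_zsmul _ x₀
    rw [h1, h2, heps, hzsm]
    congr 1
    rw [mul_comm]
    congr 1
    simp [ZMod.natCast_val, ZMod.cast_id]
  -- Fermat/Lagrange argument: `al x₀ = 1`
  have hlam_pow_sm : ∀ (m : ℕ) (k : ZMod p), lam (x₀ ^ m) (sm k) = sm ((al x₀) ^ m * k) := by
    intro m
    induction m with
    | zero => intro k; simp [lam_one_left]
    | succ m ih =>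
        intro k
        rw [pow_succ, lam_mul, hlam_sm, ih, pow_succ]
        ring_nf
  have hpow_eq : ∀ m : ℕ, x₀ ^ m = sm (∑ i ∈ Finset.range m, (al x₀) ^ i) := by
    intro m
    induction m with
    | zero => simp [hsm_zero, one_eq_zero]
    | succ m ih =>
        have hstep : lam (x₀ ^ m) x₀ = sm (al x₀ ^ m) := by
          have h9 : lam (x₀ ^ m) x₀ = lam (x₀ ^ m) (sm 1) := by congr 1
          rw [h9, hlam_pow_sm, mul_one]
        rw [pow_succ, mul_eq_add_lam, hstep, ih, ← hadd, Finset.sum_range_succ]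
  have hone : al x₀ = 1 := by
    -- the set of all `sm k` is a multiplicative subgroup of cardinality p
    have hmul_mem : ∀ k l : ZMod p, ∃ t, sm k * sm l = sm t := by
      intro k l
      refine ⟨k + al (sm k) * l, ?_⟩
      rw [mul_eq_add_lam, hlam_sm, hadd]
    have hinv_mem : ∀ k : ZMod p, ∃ t, (sm k)⁻¹ = sm t := by
      intro k
      have h1 : lam (sm k) ((sm k)⁻¹) = -(sm k) := by
        have h0 := mul_eq_add_lam (sm k) (sm k)⁻¹
        rw [mul_inv_cancel, one_eq_zero] at h0
        exact (neg_eq_of_add_eq_zero_right h0.symm).symm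
      have h3 : (sm k)⁻¹ = lam ((sm k)⁻¹) (lam (sm k) ((sm k)⁻¹)) := (lam_lam_inv _ _).symm
      rw [h1] at h3
      refine ⟨al ((sm k)⁻¹) * -k, ?_⟩
      conv_lhs => rw [h3]
      rw [← hsm_neg, hlam_sm]
    let Psub : Subgroup C :=
      { carrier := Set.range sm
        one_mem' := ⟨0, by rw [hsm_zero, one_eq_zero]⟩
        mul_mem' := by
          rintro _ _ ⟨k, rfl⟩ ⟨l, rfl⟩
          obtain ⟨t, ht⟩ := hmul_mem k l
          exact ⟨t, ht.symm⟩
        inv_mem' := by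
          rintro _ ⟨k, rfl⟩
          obtain ⟨t, ht⟩ := hinv_mem k
          exact ⟨t, ht.symm⟩ }
    let e : ZMod p ≃ Psub :=
      { toFun := fun k => ⟨sm k, ⟨k, rfl⟩⟩
        invFun := fun z => Classical.choose z.2
        left_inv := by
          intro k
          apply hinj
          exact Classical.choose_spec (⟨k, rfl⟩ : ∃ t, sm t = sm k)
        right_inv := by
          rintro ⟨z, hz⟩
          apply Subtype.ext
          exact Classical.choose_spec hz }
    haveI : Fintype Psub := Fintype.ofEquiv _ e
    have hcard : Fintype.card Psub = p := by
      rw [← Fintype.card_congr e, ZMod.card]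
    have hx0mem : x₀ ∈ Psub := ⟨1, hx1.symm⟩
    set u : Psub := ⟨x₀, hx0mem⟩ with hu
    have hdvd : orderOf u ∣ p := by rw [← hcard]; exact orderOf_dvd_card
    have hord_u : orderOf u = p := by
      rcases hp.eq_one_or_self_of_dvd _ hdvd with h | h
      · exfalso
        have h1 : u = 1 := orderOf_eq_one_iff.mp h
        apply hx0
        have h2 : x₀ = (1:C) := congrArg Subtype.val h1
        exact h2.trans one_eq_zero
      · exact h
    have hxp1 : x₀ ^ p = 1 := by
      have h1 : u ^ p = 1 := by rw [← hord_u]; exact pow_orderOf_eq_one u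
      simpa using congrArg Subtype.val h1
    -- geometric sum argument
    have hsum : (∑ i ∈ Finset.range p, (al x₀) ^ i) = 0 := by
      apply hinj
      rw [← hpow_eq, hxp1, hsm_zero, one_eq_zero]
    by_contra hne
    have h2 : (∑ i ∈ Finset.range p, (al x₀) ^ i) = ((al x₀) ^ p - 1) / (al x₀ - 1) :=
      geom_sum_eq hne p
    rw [ZMod.pow_card, div_self (sub_ne_zero.mpr hne)] at h2
    rw [hsum] at h2
    exact one_ne_zero h2.symm
  -- `lam x₀` fixes P pointwise
  have hlamx0_sm : ∀ k, lam x₀ (sm k) = sm k := by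
    intro k; rw [hlam_sm, hone, one_mul]
  have hx_pow : ∀ m : ℕ, x₀ ^ m = sm (m : ZMod p) := by
    intro m
    rw [hpow_eq, hone]
    congr 1
    simp
  have hsm_pow : ∀ (t : ZMod p), sm t = x₀ ^ (t.val) := by
    intro t
    rw [hx_pow]
    congr 1
    simp [ZMod.natCast_val, ZMod.cast_id]
  -- the function f measuring the action of lam x₀
  obtain ⟨f, hf, hfrho⟩ :
      ∃ f : C → ZMod p, (∀ b, lam x₀ b = sm (f b) + b) ∧
        (∀ b, f b + 1 = eps b * (al b * ka b⁻¹)) := by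
    refine ⟨fun b => eps b * (al b * ka b⁻¹) - 1, fun b => ?_, fun b => by ring⟩
    have h1 : x₀ * b = b * (b⁻¹ * x₀ * b) := by group
    have h2 : b⁻¹ * x₀ * b = sm (ka b⁻¹) := by
      have := hka b⁻¹
      rwa [inv_inv] at this
    have h3 : x₀ * b = sm (eps b * (al b * ka b⁻¹)) + b := by
      rw [h1, h2, mul_eq_add_lam, hlam_sm]
      calc b + sm (al b * ka b⁻¹) = (b + sm (al b * ka b⁻¹) + -b) + b := by simp [add_assoc]
        _ = sm (eps b * (al b * ka b⁻¹)) + b := by rw [hcj_sm]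
    have h4 : lam x₀ b = -x₀ + (sm (eps b * (al b * ka b⁻¹)) + b) := by
      unfold lam; rw [h3]
    rw [h4, hx1, ← hsm_neg, ← add_assoc, ← hadd]
    have hring : (-1 : ZMod p) + eps b * (al b * ka b⁻¹) = eps b * (al b * ka b⁻¹) - 1 := by
      ring
    rw [hring]
  -- lam of a general element of P
  have hlam_smt : ∀ (t : ZMod p) (b : C), lam (sm t) b = sm (t * f b) + b := by
    have hnat : ∀ (m : ℕ) (b : C), lam (x₀ ^ m) b = sm ((m : ZMod p) * f b) + b := by
      intro m
      induction m with
      | zero =>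
          intro b
          simp [lam_one_left, hsm_zero]
      | succ m ih =>
          intro b
          have hring : ((m : ZMod p) * f b) + f b = (((m+1 : ℕ)) : ZMod p) * f b := by
            push_cast; ring
          rw [pow_succ', lam_mul, ih, lam_add, hlamx0_sm, hf, ← add_assoc, ← hadd, hring]
    intro t b
    rw [hsm_pow, hnat]
    congr 2
    simp [ZMod.natCast_val, ZMod.cast_id]
  -- basic values
  have hf0 : f 0 = 0 := by
    apply hinj
    have h1 := hf 0
    rw [lam_zero_right, add_zero] at h1
    rw [← h1, hsm_zero]
  have hf1 : f 1 = 0 := by rw [one_eq_zero]; exact hf0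
  -- additivity and multiplicativity data
  have hf_add : ∀ a b : C, f (a + b) = f a + eps a * f b := by
    intro a b
    apply hinj
    have h1 : sm (f (a+b)) + (a+b) = sm (f a + eps a * f b) + (a+b) := by
      calc sm (f (a+b)) + (a+b) = lam x₀ (a+b) := (hf _).symm
        _ = lam x₀ a + lam x₀ b := lam_add _ _ _
        _ = (sm (f a) + a) + (sm (f b) + b) := by rw [hf, hf]
        _ = sm (f a) + ((a + sm (f b) + -a) + (a + b)) := by simp [add_assoc]
        _ = sm (f a) + (sm (eps a * f b) + (a + b)) := by rw [hcj_sm]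
        _ = sm (f a + eps a * f b) + (a+b) := by rw [hadd, add_assoc]
    exact add_right_cancel h1
  have heps_add : ∀ a b : C, eps (a + b) = eps a * eps b := by
    intro a b
    apply hinj
    have h1 : sm (eps (a+b)) = (a + b) + x₀ + -(a+b) := (heps _).symm
    rw [h1]
    calc (a + b) + x₀ + -(a+b) = a + (b + x₀ + -b) + -a := by simp [add_assoc]
      _ = a + sm (eps b) + -a := by rw [heps]
      _ = sm (eps a * eps b) := by rw [hcj_sm]
  have heps0 : eps 0 = 1 := by
    apply hinj
    have h1 := heps 0
    rw [zero_add, neg_zero, add_zero] at h1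
    rw [← h1, ← hx1]
  have heps_neg_mul : ∀ a : C, eps (-a) * eps a = 1 := by
    intro a
    rw [← heps_add, neg_add_cancel, heps0]
  have heps_ne : ∀ a : C, eps a ≠ 0 := by
    intro a
    exact right_ne_zero_of_mul_eq_one (heps_neg_mul a)
  have hal_inv_mul : ∀ a : C, al a⁻¹ * al a = 1 := by
    intro a
    apply hinj
    rw [← hlam_sm, ← hal, lam_lam_inv, hx1]
  have hal_ne : ∀ a : C, al a ≠ 0 := fun a => right_ne_zero_of_mul_eq_one (hal_inv_mul a)
  have heps_lam : ∀ a b : C, eps (lam a b) = eps b := by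
    intro a b
    have h1 : lam a (b + x₀ + -b) = lam a b + sm (al a) + -(lam a b) := by
      rw [lam_add, lam_add, lam_neg, hal]
    rw [heps, hlam_sm] at h1
    have h2 : lam a b + sm (al a) + -(lam a b) = sm (eps (lam a b) * al a) := hcj_sm _ _
    rw [h2] at h1
    have h3 := hinj _ _ h1
    have h4 : eps (lam a b) * al a = eps b * al a := h3.symm.trans (mul_comm _ _)
    exact mul_right_cancel₀ (hal_ne a) h4
  have heps_mul : ∀ a b : C, eps (a * b) = eps a * eps b := by
    intro a b
    rw [mul_eq_add_lam, heps_add, heps_lam]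
  have hf_lam : ∀ a b : C, f (lam a b) = (al a * ka a⁻¹) * f b := by
    intro a b
    have h1 : lam x₀ (lam a b) = lam (x₀ * a) b := by rw [lam_mul]
    have h2 : x₀ * a = a * (a⁻¹ * x₀ * a) := by group
    have h3 : a⁻¹ * x₀ * a = sm (ka a⁻¹) := by
      have := hka a⁻¹
      rwa [inv_inv] at this
    have h4 : lam (x₀ * a) b = sm (al a * (ka a⁻¹ * f b)) + lam a b := by
      rw [h2, h3, lam_mul, hlam_smt, lam_add, hlam_sm]
    rw [← h1] at h4
    rw [hf (lam a b)] at h4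
    have h5 := add_right_cancel h4
    have h6 := hinj _ _ h5
    rw [h6]; ring
  have hf_mul : ∀ a b : C, f (a * b) = f a + (f a + 1) * f b := by
    intro a b
    rw [mul_eq_add_lam, hf_add, hf_lam, hfrho]
    ring
  have hrho_mul : ∀ a b : C, f (a * b) + 1 = (f a + 1) * (f b + 1) := by
    intro a b; rw [hf_mul]; ring
  have hrho_ne : ∀ a : C, f a + 1 ≠ 0 := by
    intro a
    have h1 : (f a + 1) * (f a⁻¹ + 1) = 1 := by
      rw [← hrho_mul, mul_inv_cancel, hf1]; ring
    exact left_ne_zero_of_mul_eq_one h1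
  have hf_neg : ∀ a : C, eps a * f (-a) = - f a := by
    intro a
    have h1 : f (a + -a) = f a + eps a * f (-a) := hf_add a (-a)
    rw [add_neg_cancel, hf0] at h1
    linear_combination -h1
  -- Step 1: additively central elements have trivial lambda-action scalar
  have hstep1 : ∀ y : C, eps y = 1 → f y = 0 := by
    intro y hy
    by_contra hfy
    have haux : ∀ m : ℕ, f (m • y) = (m : ZMod p) * f y ∧ eps (m • y) = 1 := by
      intro m
      induction m with
      | zero => simp [zero_nsmul, hf0, heps0]
      | succ m ih =>
          constructor
          · rw [succ_nsmul, hf_add, ih.1, ih.2]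
            push_cast; ring
          · rw [succ_nsmul, heps_add, ih.2, hy, one_mul]
    have h1 : f (((-(f y)⁻¹ : ZMod p)).val • y) = -1 := by
      rw [(haux _).1]
      rw [show ((((-(f y)⁻¹ : ZMod p)).val : ℕ) : ZMod p) = -(f y)⁻¹ by
        simp [ZMod.natCast_val, ZMod.cast_id]]
      rw [neg_mul, inv_mul_cancel₀ hfy]
    have h2 := hrho_ne (((-(f y)⁻¹ : ZMod p)).val • y)
    rw [h1] at h2
    exact h2 (by ring)
  -- Step 2: the commutation relation between f and eps
  have hstep2 : ∀ a b : C, f a * (1 - eps b) = f b * (1 - eps a) := by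
    intro a b
    have hu : f (a + b) = f a + eps a * f b := hf_add a b
    have hv : f (b + a) = f b + eps b * f a := hf_add b a
    have hepsu : eps (a+b) = eps a * eps b := heps_add a b
    have hw : f (-(a+b) + (b+a)) = f (-(a+b)) + eps (-(a+b)) * f (b+a) := hf_add _ _
    have hepsw : eps (-(a+b) + (b+a)) = 1 := by
      rw [heps_add, heps_add b a]
      have h9 := heps_neg_mul (a+b)
      rw [hepsu] at h9
      linear_combination h9
    have h0 : f (-(a+b) + (b+a)) = 0 := hstep1 _ hepsw
    have hnegu : eps (a+b) * f (-(a+b)) = - f (a+b) := hf_neg (a+b)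
    have h2 : eps (a+b) * f (-(a+b) + (b+a)) =
        eps (a+b) * f (-(a+b)) + (eps (a+b) * eps (-(a+b))) * f (b+a) := by
      rw [hw]; ring
    rw [h0, hnegu] at h2
    have h3 : eps (a+b) * eps (-(a+b)) = 1 := by
      have h9 := heps_neg_mul (a+b); linear_combination h9
    rw [h3] at h2
    have h4 : f (a + b) = f (b + a) := by linear_combination h2
    rw [hu, hv] at h4
    linear_combination h4
  -- the dichotomy
  have hdicho : (∀ y : C, f y = 0) ∨ (∀ y : C, f y = eps y - 1) := by
    by_cases h : ∀ y : C, f y = 0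
    · exact Or.inl h
    · right
      push_neg at h
      obtain ⟨b, hb⟩ := h
      have ht : eps b ≠ 1 := fun h1 => hb (hstep1 b h1)
      have hsub : (1 : ZMod p) - eps b ≠ 0 := by
        intro h1
        apply ht
        linear_combination -h1
      have h1 : f (b * b) = f b * (1 + (f b + 1)) := by rw [hf_mul]; ring
      have h2 : f (b*b) * (1 - eps b) = f b * (1 - eps (b*b)) := hstep2 _ _
      rw [heps_mul, h1] at h2
      have h3 : f b * ((1 + (f b + 1)) * (1 - eps b)) = f b * ((1 + eps b) * (1 - eps b)) := by
        calc f b * ((1 + (f b + 1)) * (1 - eps b))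
            = f b * (1 + (f b + 1)) * (1 - eps b) := by ring
          _ = f b * (1 - eps b * eps b) := h2
          _ = f b * ((1 + eps b) * (1 - eps b)) := by ring
      have h4 := mul_left_cancel₀ hb h3
      have h5 := mul_right_cancel₀ hsub h4
      have hfb : f b = eps b - 1 := by linear_combination h5
      intro y
      have h6 : f y * (1 - eps b) = f b * (1 - eps y) := hstep2 y b
      rw [hfb] at h6
      have h7 : f y * (1 - eps b) = (eps y - 1) * (1 - eps b) := by
        calc f y * (1 - eps b) = (eps b - 1) * (1 - eps y) := h6
          _ = (eps y - 1) * (1 - eps b) := by ring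
      exact mul_right_cancel₀ hsub h7
  -- the generators of the derived ideal
  have hstar_eq : ∀ a b : C, starOp a b = lam a b + -b := fun _ _ => rfl
  have hcommut_eq : ∀ a b : C, addCommutator a b = -a + -b + a + b := fun _ _ => rfl
  have heps_star : ∀ a b : C, eps (starOp a b) = 1 := by
    intro a b
    rw [hstar_eq, heps_add, heps_lam]
    calc eps b * eps (-b) = eps (-b) * eps b := mul_comm _ _
      _ = 1 := heps_neg_mul b
  have heps_comm : ∀ a b : C, eps (addCommutator a b) = 1 := by
    intro a b
    rw [hcommut_eq, heps_add, heps_add, heps_add]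
    have h2 := heps_neg_mul a
    have h3 := heps_neg_mul b
    calc eps (-a) * eps (-b) * eps a * eps b = (eps (-a) * eps a) * (eps (-b) * eps b) := by ring
      _ = 1 := by rw [h2, h3, one_mul]
  have hf_star : ∀ a b : C, f (starOp a b) = 0 := by
    intro a b
    have h1 : f (starOp a b) = f (lam a b) + eps (lam a b) * f (-b) := by
      rw [hstar_eq]; exact hf_add _ _
    rw [heps_lam, hf_lam] at h1
    have h2 : eps b * f (-b) = - f b := hf_neg b
    rw [h2] at h1
    rcases hdicho with hd | hd
    · rw [h1, hd b]; ring
    · have h3 : eps a * (al a * ka a⁻¹) = eps a * 1 := by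
        rw [← hfrho, hd a]; ring
      have h4 := mul_left_cancel₀ (heps_ne a) h3
      rw [h1, h4]; ring
  have hf_comm : ∀ a b : C, f (addCommutator a b) = 0 := by
    intro a b
    have h1 : f (addCommutator a b)
        = f (-a) + eps (-a) * (f (-b) + eps (-b) * (f a + eps a * f b)) := by
      rw [hcommut_eq]
      simp only [hf_add, heps_add]
      ring
    rcases hdicho with hd | hd
    · rw [h1, hd, hd, hd, hd]; ring
    · rw [h1, hd (-a), hd (-b), hd a, hd b]
      have h2 := heps_neg_mul a
      have h3 := heps_neg_mul b
      linear_combination (eps (-b) * eps b) * h2 + h3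
  -- every element of the derived ideal is fixed and central
  have hmain : ∀ w ∈ derivedIdeal C, f w = 0 ∧ eps w = 1 := by
    intro w hw
    induction hw using AddSubgroup.closure_induction with
    | mem s hs =>
        rcases hs with ⟨a, b, rfl⟩ | ⟨a, b, rfl⟩
        · exact ⟨hf_star a b, heps_star a b⟩
        · exact ⟨hf_comm a b, heps_comm a b⟩
    | zero => exact ⟨hf0, heps0⟩
    | add u v hu hv ihu ihv =>
        refine ⟨?_, ?_⟩
        · rw [hf_add, ihu.1, ihv.1]; ring
        · rw [heps_add, ihu.2, ihv.2, one_mul]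
    | neg u hu ihu =>
        refine ⟨?_, ?_⟩
        · have h1 := hf_neg u
          rw [ihu.1, neg_zero] at h1
          exact (mul_eq_zero.mp h1).resolve_left (heps_ne u)
        · have h1 := heps_neg_mul u
          rw [ihu.2, mul_one] at h1
          exact h1
  -- conclusion
  intro w hw n
  obtain ⟨hfw, hepsw⟩ := hmain w hw
  constructor
  · rw [hcast n, hlam_smt, hfw, mul_zero, hsm_zero, zero_add]
  · rw [hcast n]
    have h1 : w + sm ((n : ZMod p)) + -w = sm ((n : ZMod p)) := by
      rw [hcj_sm, hepsw, one_mul]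
    calc sm ((n:ZMod p)) + w = (w + sm ((n:ZMod p)) + -w) + w := by rw [h1]
      _ = w + sm ((n:ZMod p)) := by simp [add_assoc]
/-- For a supersoluble brace `B`, the derived ideal `∂(B)` has finite
multipermutational level: `∂(B) = Soc_n(∂(B))` for some `n`. -/
theorem derivedIdeal_finite_multipermutational_level (B : Type*) [SkewBrace B]
    (hB : IsSupersoluble B) :
    ∃ n : ℕ, socChainRel (derivedIdeal B) n = derivedIdeal B := by
  obtain ⟨n, I, hI0, hIn, hmono, hfac⟩ := hB
  refine ⟨n, ?_⟩
  have key : ∀ i : ℕ, i ≤ n → ∀ x, x ∈ (I i).carrier → x ∈ derivedIdeal B →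
      x ∈ socChainRel (derivedIdeal B) i := by
    intro i
    induction i with
    | zero =>
        intro _ x hx _
        rw [hI0] at hx
        exact hx
    | succ i ih =>
        intro hin x hxI hxD
        have hi_le : i ≤ n := Nat.le_of_succ_le hin
        have hi_lt : i < n := hin
        have hkey2 : ∀ y, y ∈ derivedIdeal B →
            (-y + lam x y ∈ (I i).carrier) ∧ (-(y + x) + (x + y) ∈ (I i).carrier) := by
          rcases hfac i hi_lt with ⟨hcyc, hsoc⟩ | ⟨p, hp, x_w, hxw_mem, hxw_not, hxw_p, hxw_gen⟩
          · intro y _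
            exact ⟨(hsoc x hxI).2.1 y trivial, (hsoc x hxI).2.2 y trivial⟩
          · have hbq_eq : ∀ a c : B, -c + a ∈ (I i).carrier →
                bq (I i) a = bq (I i) c := by
              intro a c h
              rw [bq_eq_iff]
              have h2 := (I i).neg_mem h
              rwa [neg_add_rev, neg_neg] at h2
            have hcore := prime_ideal_socle p hp (bq (I i) x_w)
              (fun h => hxw_not (bq_eq_zero_iff.mp h))
              (by rw [← bq_nsmul, bq_eq_zero_iff]; exact hxw_p)
              (by
                intro bb
                obtain ⟨b, rfl⟩ := bq_surj bb
                obtain ⟨m, hm⟩ := hxw_gen _ ((I (i+1)).lam_mem b hxw_mem)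
                exact ⟨m, by rw [bq_lam, ← bq_zsmul]; exact hbq_eq _ _ hm⟩)
              (by
                intro bb
                obtain ⟨b, rfl⟩ := bq_surj bb
                obtain ⟨m, hm⟩ := hxw_gen _ ((I (i+1)).addConj_mem b hxw_mem)
                exact ⟨m, by rw [bq_neg, bq_add, bq_add, ← bq_zsmul]; exact hbq_eq _ _ hm⟩)
              (by
                intro bb
                obtain ⟨b, rfl⟩ := bq_surj bb
                obtain ⟨m, hm⟩ := hxw_gen _ ((I (i+1)).mulConj_mem b hxw_mem)
                exact ⟨m, by rw [bq_inv, bq_mul, bq_mul, ← bq_zsmul]; exact hbq_eq _ _ hm⟩)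
            intro y hy
            obtain ⟨m, hm⟩ := hxw_gen x hxI
            have hx_eq : bq (I i) x = m • bq (I i) x_w := by
              rw [← bq_zsmul]; exact hbq_eq _ _ hm
            have hw := hcore (bq (I i) y) (bq_derived hy) m
            constructor
            · have h1 : lam (bq (I i) x) (bq (I i) y) = bq (I i) y := by
                rw [hx_eq]; exact hw.1
              rw [bq_lam] at h1
              have h2 : -(lam x y) + y ∈ (I i).carrier := bq_eq_iff.mp h1
              have h3 := (I i).neg_mem h2
              rwa [neg_add_rev, neg_neg] at h3
            · have h1 : bq (I i) x + bq (I i) y = bq (I i) y + bq (I i) x := by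
                rw [hx_eq]; exact hw.2
              rw [bq_add, bq_add] at h1
              have h2 : -(x + y) + (y + x) ∈ (I i).carrier := bq_eq_iff.mp h1
              have h3 := (I i).neg_mem h2
              rwa [neg_add_rev, neg_neg] at h3
        have hgoal : MemSocQuotRel (derivedIdeal B) (socChainRel (derivedIdeal B) i) x := by
          refine ⟨hxD, ?_, ?_⟩
          · intro y hy
            have hIi : -y + lam x y ∈ (I i).carrier := (hkey2 y hy).1
            have hD : -y + lam x y ∈ derivedIdeal B := by
              have h := conj_mem_derived (-y) (starOp_mem_derived x y)
              rw [neg_neg] at h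
              have heq : -y + lam x y = -y + starOp x y + y := by
                rw [lam_eq_star_add, ← add_assoc]
              rwa [heq]
            exact ih hi_le _ hIi hD
          · intro y hy
            have hIi := (hkey2 y hy).2
            have hD : -(y + x) + (x + y) ∈ derivedIdeal B := by
              have heq : -(y + x) + (x + y) = addCommutator x y := by
                show _ = -x + -y + x + y
                rw [neg_add_rev]
                simp [add_assoc]
              rw [heq]; exact addCommutator_mem_derived x y
            exact ih hi_le _ hIi hD
        exact hgoal
  apply Set.eq_of_subset_of_subset
  · cases n with
    | zero =>
        intro x hx
        have hx0 : x = 0 := hx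
        rw [hx0]; exact zero_mem_derived
    | succ m =>
        intro x hx
        exact hx.1
  · intro x hxD
    have hxI : x ∈ (I n).carrier := by rw [hIn]; trivial
    exact key n le_rfl x hxI hxD

end SkewBrace
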